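/- Let A : ℝⁿ → ℝⁿ be symmetric positive semidefinite with matrix entries a_{ij} = ⟨Ae_i, e_j⟩ in a basis e₁,…,e_n, and suppose each row has at most c nonzero off-diagonal structure in the sense that for each i, the set S(i) = {j : a_{ij} ≠ 0} has cardinality at most c. Then for all v = Σᵢ vᵢeᵢ, ⟨Av, v⟩ ≤ c·Σᵢ vᵢ²·a_{ii}; i.e., A is bounded above by c times its diagonal part. -/

import Mathlib

open Matrix

lemma psd_diag_nonneg {n : ℕ} {A : Matrix (Fin n) (Fin n) ℝ} (hA : A.PosSemidef)
    (i : Fin n) : 0 ≤ A i i := by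
  have := hA.dotProduct_mulVec_nonneg (Pi.single i 1)
  simpa [Matrix.mulVec, dotProduct, Pi.single_apply] using this

lemma psd_entry_sq_le {n : ℕ} {A : Matrix (Fin n) (Fin n) ℝ} (hA : A.PosSemidef)
    (i j : Fin n) : (A i j) ^ 2 ≤ A i i * A j j := by
  have hsymm : A j i = A i j := hA.1.apply i j
  have hq : ∀ t : ℝ, 0 ≤ A i i * (t * t) + (2 * A i j) * t + A j j := by
    intro t
    have := hA.dotProduct_mulVec_nonneg (fun k => t * (if k = i then 1 else 0) + (if k = j then 1 else 0))
    have hval : (fun k => t * (if k = i then 1 else 0) + (if k = j then 1 else 0)) ⬝ᵥ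
        A.mulVec (fun k => t * (if k = i then 1 else 0) + (if k = j then 1 else 0))
        = A i i * (t * t) + (2 * A i j) * t + A j j := by
      simp [Matrix.mulVec, dotProduct, mul_add, add_mul, mul_ite, ite_mul,
        Finset.sum_add_distrib, Finset.sum_ite_eq, Finset.sum_ite_eq', hsymm]
      ring
    rw [star_trivial] at this
    rw [hval] at this
    exact this
  have hd := discrim_le_zero hq
  simp only [discrim] at hd
  nlinarith [hd]

theorem psd_bounded_by_diagonal_sparse
    (n : ℕ) (A : Matrix (Fin n) (Fin n) ℝ) (hA : A.PosSemidef)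
    (c : ℕ)
    (hsparse : ∀ i : Fin n, (Finset.univ.filter fun j => A i j ≠ 0).card ≤ c) :
    ∀ v : Fin n → ℝ, v ⬝ᵥ A.mulVec v ≤ (c : ℝ) * ∑ i, v i ^ 2 * A i i := by
  intro v
  have hsymm : ∀ i j, A j i = A i j := fun i j => hA.1.apply i j
  have hdiag := psd_diag_nonneg hA
  -- termwise bound
  have key : ∀ i j, v i * (A i j * v j) ≤
      (if A i j ≠ 0 then (v i ^ 2 * A i i + v j ^ 2 * A j j) / 2 else 0) := by
    intro i j
    by_cases h : A i j = 0
    · simp [h]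
    · simp only [h, ne_eq, not_false_eq_true, if_true]
      have h1 : (A i j) ^ 2 ≤ A i i * A j j := psd_entry_sq_le hA i j
      have h2 : v i * (A i j * v j) ≤ |v i| * |A i j| * |v j| := by
        calc v i * (A i j * v j) ≤ |v i * (A i j * v j)| := le_abs_self _
        _ = |v i| * |A i j| * |v j| := by rw [abs_mul, abs_mul]; ring
      have h3 : |A i j| ≤ Real.sqrt (A i i) * Real.sqrt (A j j) := by
        rw [← Real.sqrt_mul_self (abs_nonneg (A i j)), ← Real.sqrt_mul (hdiag i)]
        apply Real.sqrt_le_sqrt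
        nlinarith [sq_abs (A i j)]
      have h4 : |v i| * |A i j| * |v j| ≤ (Real.sqrt (A i i) * |v i|) * (Real.sqrt (A j j) * |v j|) := by
        have : |v i| * |A i j| * |v j| = |A i j| * (|v i| * |v j|) := by ring
        rw [this]
        have : (Real.sqrt (A i i) * |v i|) * (Real.sqrt (A j j) * |v j|)
            = (Real.sqrt (A i i) * Real.sqrt (A j j)) * (|v i| * |v j|) := by ring
        rw [this]
        exact mul_le_mul_of_nonneg_right h3 (by positivity)
      have h5 : (Real.sqrt (A i i) * |v i|) * (Real.sqrt (A j j) * |v j|) ≤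
          ((Real.sqrt (A i i) * |v i|) ^ 2 + (Real.sqrt (A j j) * |v j|) ^ 2) / 2 := by
        nlinarith [sq_nonneg (Real.sqrt (A i i) * |v i| - Real.sqrt (A j j) * |v j|)]
      have h6 : (Real.sqrt (A i i) * |v i|) ^ 2 = v i ^ 2 * A i i := by
        rw [mul_pow, Real.sq_sqrt (hdiag i), sq_abs]; ring
      have h7 : (Real.sqrt (A j j) * |v j|) ^ 2 = v j ^ 2 * A j j := by
        rw [mul_pow, Real.sq_sqrt (hdiag j), sq_abs]; ring
      linarith
  have hexp : v ⬝ᵥ A.mulVec v = ∑ i, ∑ j, v i * (A i j * v j) := by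
    simp [Matrix.mulVec, dotProduct, Finset.mul_sum]
  rw [hexp]
  have step1 : ∑ i, ∑ j, v i * (A i j * v j) ≤
      ∑ i : Fin n, ∑ j : Fin n, (if A i j ≠ 0 then (v i ^ 2 * A i i + v j ^ 2 * A j j) / 2 else 0) :=
    Finset.sum_le_sum fun i _ => Finset.sum_le_sum fun j _ => key i j
  refine step1.trans ?_
  have split : ∀ i j : Fin n, (if A i j ≠ 0 then (v i ^ 2 * A i i + v j ^ 2 * A j j) / 2 else 0)
      = (if A i j ≠ 0 then v i ^ 2 * A i i / 2 else 0) + (if A i j ≠ 0 then v j ^ 2 * A j j / 2 else 0) := by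
    intro i j; by_cases h : A i j = 0 <;> simp [h] <;> ring
  simp only [split, Finset.sum_add_distrib]
  have bound1 : ∑ i : Fin n, ∑ j : Fin n, (if A i j ≠ 0 then v i ^ 2 * A i i / 2 else 0)
      ≤ ∑ i : Fin n, (c : ℝ) * (v i ^ 2 * A i i / 2) := by
    apply Finset.sum_le_sum
    intro i _
    rw [← Finset.sum_filter]
    rw [Finset.sum_const, nsmul_eq_mul]
    apply mul_le_mul_of_nonneg_right _ (by nlinarith [hdiag i, sq_nonneg (v i)])
    exact_mod_cast hsparse i
  have bound2 : ∑ i : Fin n, ∑ j : Fin n, (if A i j ≠ 0 then v j ^ 2 * A j j / 2 else 0)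
      ≤ ∑ j : Fin n, (c : ℝ) * (v j ^ 2 * A j j / 2) := by
    rw [Finset.sum_comm]
    apply Finset.sum_le_sum
    intro j _
    have : ∀ i : Fin n, (A i j ≠ 0) = (A j i ≠ 0) := by
      intro i; rw [hsymm i j]
    simp only [this]
    rw [← Finset.sum_filter, Finset.sum_const, nsmul_eq_mul]
    apply mul_le_mul_of_nonneg_right _ (by nlinarith [hdiag j, sq_nonneg (v j)])
    exact_mod_cast hsparse j
  calc _ ≤ (∑ i : Fin n, (c : ℝ) * (v i ^ 2 * A i i / 2)) + ∑ j : Fin n, (c : ℝ) * (v j ^ 2 * A j j / 2) :=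
        add_le_add bound1 bound2
    _ = (c : ℝ) * ∑ i, v i ^ 2 * A i i := by
        rw [← Finset.sum_add_distrib, Finset.mul_sum]
        apply Finset.sum_congr rfl
        intro i _; ring
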